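/- For constants D > 0, W > 0, and γ > 0, the function f(τ) = (τ/γ)·(2^(D/(W·τ)) − 1) defined for τ > 0 is strictly decreasing in τ. -/

import Mathlib

/-- Chord-slope inequality for `2^x` from strict convexity of `exp`. -/
lemma key_slope (x y : ℝ) (hx : 0 < x) (hxy : x < y) :
    y * ((2 : ℝ) ^ x - 1) < x * ((2 : ℝ) ^ y - 1) := by
  have hy : 0 < y := hx.trans hxy
  have hlog2 : 0 < Real.log 2 := Real.log_pos (by norm_num)
  have hb : 0 < x / y := div_pos hx hy
  have ha : 0 < 1 - x / y := by
    have : x / y < 1 := (div_lt_one hy).2 hxy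
    linarith
  have hne : (0 : ℝ) ≠ y * Real.log 2 := ne_of_lt (by positivity)
  have hconv := strictConvexOn_exp.2 (Set.mem_univ 0) (Set.mem_univ (y * Real.log 2))
    hne ha hb (by ring)
  have hsm : (1 - x / y) • (0 : ℝ) + (x / y) • (y * Real.log 2) = x * Real.log 2 := by
    field_simp
    simp only [smul_eq_mul, mul_zero, zero_add]
    rw [div_mul_eq_mul_div, mul_left_comm, mul_div_cancel_left₀ _ hy.ne']
  rw [hsm] at hconv
  simp only [smul_eq_mul, Real.exp_zero] at hconv
  have h2x : (2 : ℝ) ^ x = Real.exp (x * Real.log 2) := by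
    rw [Real.rpow_def_of_pos (by norm_num : (0:ℝ) < 2)]; ring_nf
  have h2y : (2 : ℝ) ^ y = Real.exp (y * Real.log 2) := by
    rw [Real.rpow_def_of_pos (by norm_num : (0:ℝ) < 2)]; ring_nf
  rw [← h2x, ← h2y] at hconv
  have : y * ((2:ℝ) ^ x) < y * ((1 - x/y) * 1 + x/y * (2:ℝ)^y) :=
    (mul_lt_mul_iff_right₀ hy).2 hconv
  have hexp : y * ((1 - x/y) * 1 + x/y * (2:ℝ)^y) = y - x + x * (2:ℝ)^y := by
    field_simp
  nlinarith [this, hexp]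

theorem stmt_0 (D W γ : ℝ) (hD : 0 < D) (hW : 0 < W) (hγ : 0 < γ) :
    StrictAntiOn (fun τ : ℝ => (τ / γ) * ((2 : ℝ) ^ (D / (W * τ)) - 1)) (Set.Ioi 0) := by
  intro τ₁ h₁ τ₂ h₂ h₁₂
  simp only [Set.mem_Ioi] at h₁ h₂
  set x := D / (W * τ₂) with hxdef
  set y := D / (W * τ₁) with hydef
  have hx : 0 < x := by positivity
  have hy : 0 < y := by positivity
  have hxy : x < y := by
    apply div_lt_div_of_pos_left hD (by positivity)
    exact (mul_lt_mul_iff_right₀ hW).2 h₁₂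
  have hkey := key_slope x y hx hxy
  -- τ₂ = D/(W*x), τ₁ = D/(W*y)
  have hτ₂ : τ₂ * x = D / W := by
    rw [hxdef]; field_simp
  have hτ₁ : τ₁ * y = D / W := by
    rw [hydef]; field_simp
  simp only
  rw [div_mul_eq_mul_div, div_mul_eq_mul_div, div_lt_div_iff₀ hγ hγ]
  have h1 : 0 < (2:ℝ)^x - 1 := by
    have : (1:ℝ) < (2:ℝ)^x := by
      exact (Real.one_lt_rpow_iff_of_pos (show (0:ℝ) < 2 by norm_num)).2 (Or.inl ⟨one_lt_two, hx⟩)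
    linarith
  -- goal: τ₂ * (2^x - 1) * γ < τ₁ * (2^y - 1) * γ
  apply mul_lt_mul_of_pos_right _ hγ
  -- τ₂ * (2^x-1) < τ₁ * (2^y-1); multiply hkey by D/W/(x*y)
  have := mul_lt_mul_of_pos_left hkey (show 0 < D / W / (x * y) by positivity)
  calc τ₂ * ((2:ℝ)^x - 1) = D / W / (x*y) * (y * ((2:ℝ)^x - 1)) := by
        rw [← hτ₂]; field_simp
    _ < D / W / (x*y) * (x * ((2:ℝ)^y - 1)) := this
    _ = τ₁ * ((2:ℝ)^y - 1) := by
        rw [← hτ₁]; field_simp
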